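/- Let S be a unitary on H ⊕ L. The transduction action of S on H, sending ξ to the unique τ ∈ H with S(ξ ⊕ v) = τ ⊕ v for some v ∈ L orthogonal to the 1-eigenspace of Π S Π, is a unitary map from H to H. -/

import Mathlib

open Submodule
open scoped InnerProductSpace

noncomputable section Transduction

variable {W : Type*} [NormedAddCommGroup W] [InnerProductSpace ℂ W] [FiniteDimensional ℂ W]
  (H : Submodule ℂ W) (S : W ≃ₗᵢ[ℂ] W)

/-- `B v = v - Π S v` on `L = Hᗮ`. -/
def tdB : ↥Hᗮ →ₗ[ℂ] ↥Hᗮ :=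
  LinearMap.id - ((orthogonalProjection Hᗮ).toLinearMap ∘ₗ
    ((S.toLinearEquiv : W →ₗ[ℂ] W) ∘ₗ Hᗮ.subtype))

lemma tdB_apply (w : Hᗮ) : tdB H S w = w - orthogonalProjection Hᗮ (S w) := rfl

/-- `C ξ = Π S ξ`. -/
def tdC : ↥H →ₗ[ℂ] ↥Hᗮ :=
  (orthogonalProjection Hᗮ).toLinearMap ∘ₗ ((S.toLinearEquiv : W →ₗ[ℂ] W) ∘ₗ H.subtype)

lemma tdC_apply (ξ : H) : tdC H S ξ = orthogonalProjection Hᗮ (S ξ) := rfl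

lemma tdB_eq_zero_iff (w : Hᗮ) : tdB H S w = 0 ↔ S (w : W) = w := by
  constructor
  · intro h
    rw [tdB_apply, sub_eq_zero] at h
    set x := S (w : W) with hx
    have hdec : (↑(orthogonalProjection H x) : W) + ↑(orthogonalProjection Hᗮ x) = x :=
      H.starProjection_add_starProjection_orthogonal x
    have hinner : ⟪(↑(orthogonalProjection H x) : W), ↑(orthogonalProjection Hᗮ x)⟫_ℂ = 0 :=
      Submodule.inner_right_of_mem_orthogonal (orthogonalProjection H x).2
        (orthogonalProjection Hᗮ x).2
    have hsq := norm_add_sq_eq_norm_sq_add_norm_sq_of_inner_eq_zero _ _ hinner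
    rw [hdec] at hsq
    have hnx : ‖x‖ = ‖(w : W)‖ := S.norm_map _
    have hnp : ‖(↑(orthogonalProjection Hᗮ x) : W)‖ = ‖(w : W)‖ := by rw [← h]
    have hz : (↑(orthogonalProjection H x) : W) = 0 := by
      have h0 : ‖(↑(orthogonalProjection H x) : W)‖ *
          ‖(↑(orthogonalProjection H x) : W)‖ = 0 := by
        rw [hnx, hnp] at hsq; linarith
      simpa using mul_self_eq_zero.mp h0
    rw [← hdec, hz, zero_add, h]
  · intro h
    rw [tdB_apply, sub_eq_zero, h]
    exact Subtype.ext (congrArg Subtype.val (orthogonalProjectionOnto_mem_subspace_eq_self w)).symm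

lemma tdB_mem (v : Hᗮ) : tdB H S v ∈ (LinearMap.ker (tdB H S))ᗮ := by
  rw [Submodule.mem_orthogonal]
  intro u hu
  have hSu : S (u : W) = u := (tdB_eq_zero_iff H S u).mp hu
  rw [tdB_apply, inner_sub_right]
  have h1 : ⟪u, orthogonalProjection Hᗮ (S (v : W))⟫_ℂ = ⟪(u : W), S (v : W)⟫_ℂ :=
    inner_orthogonalProjection_eq_of_mem_left (K := Hᗮ) u (S (v : W))
  have h2 : ⟪(u : W), S (v : W)⟫_ℂ = ⟪(u : W), (v : W)⟫_ℂ := by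
    conv_lhs => rw [← hSu]
    exact S.inner_map_map _ _
  rw [h1, h2]
  simp [Submodule.coe_inner]

lemma tdC_mem (ξ : H) : tdC H S ξ ∈ (LinearMap.ker (tdB H S))ᗮ := by
  rw [Submodule.mem_orthogonal]
  intro u hu
  have hSu : S (u : W) = u := (tdB_eq_zero_iff H S u).mp hu
  rw [tdC_apply]
  have h1 : ⟪u, orthogonalProjection Hᗮ (S (ξ : W))⟫_ℂ = ⟪(u : W), S (ξ : W)⟫_ℂ :=
    inner_orthogonalProjection_eq_of_mem_left (K := Hᗮ) u (S (ξ : W))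
  have h2 : ⟪(u : W), S (ξ : W)⟫_ℂ = ⟪(u : W), (ξ : W)⟫_ℂ := by
    conv_lhs => rw [← hSu]
    exact S.inner_map_map _ _
  rw [h1, h2]
  exact Submodule.inner_left_of_mem_orthogonal ξ.2 u.2

/-- `B` restricted to `(ker B)ᗮ`, as a map into `(ker B)ᗮ`. -/
def tdD : ↥(LinearMap.ker (tdB H S))ᗮ →ₗ[ℂ] ↥(LinearMap.ker (tdB H S))ᗮ :=
  LinearMap.codRestrict _ ((tdB H S).domRestrict (LinearMap.ker (tdB H S))ᗮ)
    (fun x => tdB_mem H S x)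

lemma tdD_bij : Function.Bijective (tdD H S) := by
  have hinj : Function.Injective (tdD H S) := by
    rw [injective_iff_map_eq_zero]
    intro x hx
    have hx' : tdB H S (x : ↥Hᗮ) = 0 := congrArg Subtype.val hx
    have hker : (x : ↥Hᗮ) ∈ LinearMap.ker (tdB H S) := hx'
    have : ⟪(x : ↥Hᗮ), (x : ↥Hᗮ)⟫_ℂ = 0 :=
      Submodule.inner_right_of_mem_orthogonal hker x.2
    exact Subtype.ext (inner_self_eq_zero.mp this)
  exact ⟨hinj, LinearMap.injective_iff_surjective.mp hinj⟩

def tdE : ↥(LinearMap.ker (tdB H S))ᗮ ≃ₗ[ℂ] ↥(LinearMap.ker (tdB H S))ᗮ :=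
  LinearEquiv.ofBijective (tdD H S) (tdD_bij H S)

/-- The linear choice of `v` for each `ξ`. -/
def tdV : ↥H →ₗ[ℂ] ↥Hᗮ :=
  (LinearMap.ker (tdB H S))ᗮ.subtype ∘ₗ (tdE H S).symm.toLinearMap ∘ₗ
    LinearMap.codRestrict _ (tdC H S) (tdC_mem H S)

lemma tdV_mem (ξ : H) : tdV H S ξ ∈ (LinearMap.ker (tdB H S))ᗮ :=
  ((tdE H S).symm _).2

lemma tdB_tdV (ξ : H) : tdB H S (tdV H S ξ) = tdC H S ξ := by
  have h : ∀ y : ↥(LinearMap.ker (tdB H S))ᗮ, tdB H S (y : ↥Hᗮ) = ↑(tdE H S y) := fun _ => rfl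
  show tdB H S ((tdE H S).symm _ : ↥Hᗮ) = _
  rw [h, LinearEquiv.apply_symm_apply]; rfl

lemma td_proj (ξ : H) :
    orthogonalProjection Hᗮ (S ((ξ : W) + ↑(tdV H S ξ))) = tdV H S ξ := by
  rw [map_add, map_add]
  have h1 : orthogonalProjection Hᗮ (S (ξ : W)) = tdC H S ξ := rfl
  have h2 : orthogonalProjection Hᗮ (S ((tdV H S ξ : W))) = tdV H S ξ - tdB H S (tdV H S ξ) := by
    rw [tdB_apply]; abel
  rw [h1, h2, tdB_tdV]
  abel

/-- The transduction action as a linear map. -/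
def tdT : ↥H →ₗ[ℂ] ↥H :=
  (orthogonalProjection H).toLinearMap ∘ₗ ((S.toLinearEquiv : W →ₗ[ℂ] W) ∘ₗ
    (H.subtype + Hᗮ.subtype ∘ₗ tdV H S))

lemma tdT_spec (ξ : H) :
    S ((ξ : W) + ↑(tdV H S ξ)) = ↑(tdT H S ξ) + ↑(tdV H S ξ) := by
  have h1 : tdT H S ξ = orthogonalProjection H (S ((ξ : W) + ↑(tdV H S ξ))) := rfl
  have : (↑(orthogonalProjection H (S ((ξ : W) + ↑(tdV H S ξ)))) : W) +
      ↑(orthogonalProjection Hᗮ (S ((ξ : W) + ↑(tdV H S ξ)))) = S ((ξ : W) + ↑(tdV H S ξ)) :=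
    H.starProjection_add_starProjection_orthogonal
    (S ((ξ : W) + ↑(tdV H S ξ)))
  rw [td_proj] at this
  rw [h1, this]

lemma tdT_norm (ξ : H) : ‖tdT H S ξ‖ = ‖ξ‖ := by
  have h1 : ‖S ((ξ : W) + ↑(tdV H S ξ))‖ = ‖(ξ : W) + ↑(tdV H S ξ)‖ := S.norm_map _
  have hi1 : ⟪(ξ : W), (↑(tdV H S ξ) : W)⟫_ℂ = 0 :=
    Submodule.inner_right_of_mem_orthogonal ξ.2 (tdV H S ξ).2
  have hi2 : ⟪(↑(tdT H S ξ) : W), (↑(tdV H S ξ) : W)⟫_ℂ = 0 :=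
    Submodule.inner_right_of_mem_orthogonal (tdT H S ξ).2 (tdV H S ξ).2
  have e1 := norm_add_sq_eq_norm_sq_add_norm_sq_of_inner_eq_zero _ _ hi1
  have e2 := norm_add_sq_eq_norm_sq_add_norm_sq_of_inner_eq_zero _ _ hi2
  rw [tdT_spec H S ξ] at h1
  have hq : ‖(↑(tdT H S ξ) : W)‖ * ‖(↑(tdT H S ξ) : W)‖ = ‖(ξ : W)‖ * ‖(ξ : W)‖ := by
    rw [h1] at e2; linarith
  have := (mul_self_inj (norm_nonneg _) (norm_nonneg _)).mp hq
  simpa using this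

end Transduction

/-- **The transduction action is unitary.** Let `S` be a unitary on `W = H ⊕ L` with
`L = Hᗮ`. The transduction action of `S` on `H`, sending `ξ` to the unique `τ ∈ H` with
`S(ξ ⊕ v) = τ ⊕ v` for some `v ∈ L` orthogonal to the `1`-eigenspace of `Π S Π`, is a
unitary map from `H` to `H`. -/
theorem transduction_action_unitary
    {W : Type*} [NormedAddCommGroup W] [InnerProductSpace ℂ W] [FiniteDimensional ℂ W]
    (H : Submodule ℂ W) (S : W ≃ₗᵢ[ℂ] W) :
    ∃ T : H ≃ₗᵢ[ℂ] H, ∀ ξ : H, ∃ v ∈ Hᗮ,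
      (∀ w ∈ Hᗮ, ((Hᗮ.orthogonalProjectionOnto (S w)) : W) = w → (inner ℂ v w : ℂ) = 0) ∧
      S ((ξ : W) + v) = (T ξ : W) + v := by
  let Ti : ↥H →ₗᵢ[ℂ] ↥H := ⟨tdT H S, tdT_norm H S⟩
  have hsurj : Function.Surjective Ti :=
    LinearMap.injective_iff_surjective.mp Ti.injective
  refine ⟨LinearIsometryEquiv.ofSurjective Ti hsurj, fun ξ => ?_⟩
  refine ⟨↑(tdV H S ξ), (tdV H S ξ).2, ?_, ?_⟩
  · intro w hw hproj
    have hw' : (⟨w, hw⟩ : ↥Hᗮ) ∈ LinearMap.ker (tdB H S) := by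
      rw [LinearMap.mem_ker, tdB_apply, sub_eq_zero]
      exact Subtype.ext hproj.symm
    have h0 : ⟪(⟨w, hw⟩ : ↥Hᗮ), tdV H S ξ⟫_ℂ = 0 :=
      Submodule.inner_right_of_mem_orthogonal hw' (tdV_mem H S ξ)
    have h1 : ⟪tdV H S ξ, (⟨w, hw⟩ : ↥Hᗮ)⟫_ℂ = 0 := by
      rw [← inner_conj_symm, h0, map_zero]
    exact h1
  · rw [tdT_spec H S ξ]
    congr 2
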